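/- Let n be a positive integer, D = −3n², and (x₀, y₀) a rational point on y² = 4x³ + 81n² with x₀ ≠ 0. Write m for the unique cube-free positive integer with m ≡ |(y₀ − 9n)/(y₀ + 9n)| in ℚ^×/(ℚ^×)³. Then every prime factor of m other than 3 divides n. -/

import Mathlib

/-- Let `n` be a positive integer, `D = −3n²`, and `(x₀, y₀)` a rational point on
`y² = 4x³ + 81n²` with `x₀ ≠ 0`.  Then, for every prime `p ≠ 3` not dividing `n`,
the `p`-adic valuation of `(y₀ − 9n)/(y₀ + 9n)` is divisible by 3; i.e. every prime
factor other than 3 of the cube-free representative `m` of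
`(y₀ − 9n)/(y₀ + 9n)` in `ℚ^×/(ℚ^×)³` divides `n`. -/
theorem prime_factors_divide_n (n : ℕ) (hn : 0 < n) (x₀ y₀ : ℚ)
    (hE : y₀ ^ 2 = 4 * x₀ ^ 3 + 81 * (n : ℚ) ^ 2) (hx₀ : x₀ ≠ 0) :
    ∀ p : ℕ, p.Prime → p ≠ 3 → ¬(p ∣ n) →
      (3 : ℤ) ∣ padicValRat p ((y₀ - 9 * n) / (y₀ + 9 * n)) := by
  intro p hp hp3 hpn
  haveI : Fact p.Prime := ⟨hp⟩
  set a : ℚ := y₀ - 9 * n with ha_def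
  set b : ℚ := y₀ + 9 * n with hb_def
  have hab : a * b = 4 * x₀ ^ 3 := by rw [ha_def, hb_def]; ring_nf; linarith [hE]
  have h4 : (4 : ℚ) * x₀ ^ 3 ≠ 0 := by positivity
  have ha : a ≠ 0 := fun h => h4 (by rw [← hab, h, zero_mul])
  have hb : b ≠ 0 := fun h => h4 (by rw [← hab, h, mul_zero])
  have hn0 : (n : ℚ) ≠ 0 := Nat.cast_ne_zero.mpr hn.ne'
  -- valuation of 18n is the valuation of 2
  have hv3 : padicValRat p 3 = 0 := by
    rw [show ((3 : ℚ)) = ((3 : ℕ) : ℚ) by norm_num, padicValRat.of_nat]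
    exact_mod_cast padicValNat.eq_zero_of_not_dvd (by
      intro h
      exact hp3 ((Nat.prime_dvd_prime_iff_eq hp (by norm_num)).mp h))
  have hvn : padicValRat p (n : ℚ) = 0 := by
    rw [padicValRat.of_nat]
    exact_mod_cast padicValNat.eq_zero_of_not_dvd hpn
  have hv18n : padicValRat p (18 * (n : ℚ)) = padicValRat p 2 := by
    have : (18 : ℚ) * n = 2 * (3 * (3 * n)) := by ring
    rw [this, padicValRat.mul (by norm_num) (by positivity),
      padicValRat.mul (by norm_num) (by positivity),
      padicValRat.mul (by norm_num) hn0, hv3, hvn]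
    ring
  -- valuation of a*b
  have hvab : padicValRat p a + padicValRat p b
      = 2 * padicValRat p 2 + 3 * padicValRat p x₀ := by
    rw [← padicValRat.mul ha hb, hab,
      show (4 : ℚ) * x₀ ^ 3 = 2 * (2 * x₀ ^ 3) by ring,
      padicValRat.mul (by norm_num) (by positivity),
      padicValRat.mul (by norm_num) (pow_ne_zero _ hx₀),
      padicValRat.pow x₀]
    push_cast
    ring
  rw [padicValRat.div ha hb]
  rcases lt_trichotomy (padicValRat p a) (padicValRat p b) with h | h | h
  · -- min is v a; b + (-a) = 18n
    have hmin : padicValRat p (b + (-a)) = min (padicValRat p b) (padicValRat p (-a)) := by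
      refine padicValRat.add_eq_min ?_ hb (neg_ne_zero.mpr ha) ?_
      · rw [show b + -a = 18 * (n : ℚ) by rw [ha_def, hb_def]; ring]
        positivity
      · rw [padicValRat.neg]; exact h.ne'
    rw [show b + -a = 18 * (n : ℚ) by rw [ha_def, hb_def]; ring, hv18n,
      padicValRat.neg, min_eq_right h.le] at hmin
    refine ⟨-padicValRat p x₀, by omega⟩
  · simp [h]
  · have hmin : padicValRat p (b + (-a)) = min (padicValRat p b) (padicValRat p (-a)) := by
      refine padicValRat.add_eq_min ?_ hb (neg_ne_zero.mpr ha) ?_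
      · rw [show b + -a = 18 * (n : ℚ) by rw [ha_def, hb_def]; ring]
        positivity
      · rw [padicValRat.neg]; exact h.ne
    rw [show b + -a = 18 * (n : ℚ) by rw [ha_def, hb_def]; ring, hv18n,
      padicValRat.neg, min_eq_left h.le] at hmin
    exact ⟨padicValRat p x₀, by omega⟩
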